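/- Let H be finite-dimensional, Θ, U finite sets, and P₀ a closed convex subset of the set of POVMs with outcome set U. Then the minimax theorem holds relative to P₀: min_{M∈P₀} max_θ R_M(θ) = max_{π∈Δ(Θ)} min_{M∈P₀} Σ_θ R_M(θ)π(θ), and there exist both a minimax POVM in P₀ and a least favorable prior for the restricted problem. -/

import Mathlib

open Matrix
open scoped ComplexOrder

variable {n : ℕ} {Θ U : Type*}

/-- A POVM with finite outcome set `U`. -/
def IsPOVM [Fintype U] (M : U → Matrix (Fin n) (Fin n) ℂ) : Prop :=
  (∀ u, (M u).PosSemidef) ∧ ∑ u, M u = 1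

/-- The risk of the POVM `M` at parameter `θ`. -/
noncomputable def risk [Fintype U] (w : Θ → U → ℝ)
    (ρ : Θ → Matrix (Fin n) (Fin n) ℂ) (M : U → Matrix (Fin n) (Fin n) ℂ) (θ : Θ) : ℝ :=
  ∑ u, w θ u * ((ρ θ * M u).trace).re

namespace QMinimaxAux

lemma quad_expand (A : Matrix (Fin n) (Fin n) ℂ) (i j : Fin n) (c d : ℂ) :
    star (Pi.single i c + Pi.single j d) ⬝ᵥ A *ᵥ (Pi.single i c + Pi.single j d)
      = (starRingEnd ℂ) c * (A i i * c) + (starRingEnd ℂ) c * (A i j * d)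
        + ((starRingEnd ℂ) d * (A j i * c) + (starRingEnd ℂ) d * (A j j * d)) := by
  have hs : ∀ (k : Fin n) (z : ℂ), star (Pi.single k z : Fin n → ℂ) = Pi.single k ((starRingEnd ℂ) z) := by
    intro k z
    ext l; by_cases h : l = k <;> simp [h, Pi.single_apply]
  rw [star_add, hs, hs, mulVec_add, dotProduct_add, add_dotProduct, add_dotProduct,
    Matrix.mulVec_single, Matrix.mulVec_single, single_dotProduct, single_dotProduct,
    single_dotProduct, single_dotProduct]
  simp only [Pi.smul_apply, Matrix.col_apply, op_smul_eq_mul]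
  ring

lemma diag_entry_re_nonneg {A : Matrix (Fin n) (Fin n) ℂ} (hA : A.PosSemidef) (i : Fin n) :
    0 ≤ (A i i).re := by
  have h := hA.re_dotProduct_nonneg (Pi.single i 1)
  have hx : star (Pi.single i (1:ℂ) : Fin n → ℂ) ⬝ᵥ A *ᵥ Pi.single i (1:ℂ) = A i i := by
    have hs : star (Pi.single i (1:ℂ) : Fin n → ℂ) = Pi.single i 1 := by
      ext l; by_cases h : l = i <;> simp [h, Pi.single_apply]
    rw [hs, Matrix.mulVec_single, single_dotProduct]
    simp
  rwa [hx] at h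

lemma entry_abs_le_half {A : Matrix (Fin n) (Fin n) ℂ} (hA : A.PosSemidef) (i j : Fin n) :
    ‖A i j‖ ≤ ((A i i).re + (A j j).re) / 2 := by
  by_cases h0 : A i j = 0
  · simp [h0]
    have := diag_entry_re_nonneg hA i
    have := diag_entry_re_nonneg hA j
    linarith
  · set c : ℂ := -(A i j) / (‖A i j‖ : ℂ) with hc
    have habs : (‖A i j‖ : ℝ) ≠ 0 := by
      simpa using h0
    have hcc : (starRingEnd ℂ) c * A i j = -(‖A i j‖ : ℂ) := by
      rw [hc]
      rw [map_div₀, map_neg]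
      rw [Complex.conj_ofReal]
      field_simp
      rw [Complex.conj_mul']
    have hq := hA.re_dotProduct_nonneg (Pi.single i c + Pi.single j 1)
    rw [quad_expand] at hq
    have hcu : (starRingEnd ℂ) c * c = 1 := by
      rw [hc, map_div₀, map_neg, Complex.conj_ofReal]
      rw [div_mul_div_comm, neg_mul_neg, Complex.conj_mul']
      rw [pow_two, div_self (mul_ne_zero (Complex.ofReal_ne_zero.mpr habs) (Complex.ofReal_ne_zero.mpr habs))]
    have hji : A j i = (starRingEnd ℂ) (A i j) := by
      have := hA.isHermitian
      have h2 : Aᴴ j i = A j i := by rw [this]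
      rw [← h2, Matrix.conjTranspose_apply, Complex.star_def]
    have e1 : (starRingEnd ℂ) c * (A i i * c) = A i i := by
      rw [show (starRingEnd ℂ) c * (A i i * c) = A i i * ((starRingEnd ℂ) c * c) by ring, hcu, mul_one]
    have e2 : (starRingEnd ℂ) c * (A i j * 1) = -(‖A i j‖ : ℂ) := by
      rw [mul_one]; exact hcc
    have e3 : (starRingEnd ℂ) (1:ℂ) * (A j i * c) = -(‖A i j‖ : ℂ) := by
      rw [RingHom.map_one, one_mul, hji, hc]
      have key : (starRingEnd ℂ) (A i j) * A i j = (‖A i j‖:ℂ) * (‖A i j‖:ℂ) := by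
        rw [Complex.conj_mul']; ring
      calc (starRingEnd ℂ) (A i j) * (-A i j / (‖A i j‖:ℂ))
          = -((starRingEnd ℂ) (A i j) * A i j) / (‖A i j‖:ℂ) := by ring
        _ = -(‖A i j‖:ℂ) := by
            rw [key, neg_div, mul_div_assoc, div_self (Complex.ofReal_ne_zero.mpr habs), mul_one]
    rw [e1, e2, e3, RingHom.map_one, one_mul, mul_one] at hq
    simp only [RCLike.re_to_complex, Complex.add_re, Complex.neg_re, Complex.ofReal_re] at hq
    linarith

lemma trace_re_nonneg {A : Matrix (Fin n) (Fin n) ℂ} (hA : A.PosSemidef) :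
    0 ≤ A.trace.re := by
  rw [Matrix.trace]
  have h : (∑ i, A.diag i).re = ∑ i, (A i i).re := by
    rw [Complex.re_sum]; rfl
  rw [h]
  exact Finset.sum_nonneg fun i _ => diag_entry_re_nonneg hA i

lemma trace_mul_re_nonneg {ρ M : Matrix (Fin n) (Fin n) ℂ}
    (hρ : ρ.PosSemidef) (hM : M.PosSemidef) : 0 ≤ ((ρ * M).trace).re := by
  obtain ⟨B, rfl⟩ : ∃ B : Matrix (Fin n) (Fin n) ℂ, M = Bᴴ * B := by
    open scoped MatrixOrder in exact CStarAlgebra.nonneg_iff_eq_star_mul_self.mp hM.nonneg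
  have h1 : (ρ * (Bᴴ * B)).trace = (B * ρ * Bᴴ).trace := by
    rw [← mul_assoc, Matrix.trace_mul_cycle]
  rw [h1]
  exact trace_re_nonneg (hρ.mul_mul_conjTranspose_same B)

lemma psd_sum {s : Finset U} (M : U → Matrix (Fin n) (Fin n) ℂ)
    (h : ∀ u ∈ s, (M u).PosSemidef) : (∑ u ∈ s, M u).PosSemidef := by
  classical
  induction s using Finset.induction_on with
  | empty => simpa using Matrix.PosSemidef.zero
  | insert _ _ hnotmem ih =>
      rw [Finset.sum_insert hnotmem]
      exact (h _ (Finset.mem_insert_self _ _)).add (ih fun u hu => h u (Finset.mem_insert_of_mem hu))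

lemma povm_entry_bound [Fintype U] {M : U → Matrix (Fin n) (Fin n) ℂ} (hM : IsPOVM M)
    (u : U) (i j : Fin n) : ‖M u i j‖ ≤ 1 := by
  classical
  have hcompl : ((1 : Matrix (Fin n) (Fin n) ℂ) - M u).PosSemidef := by
    have h1 : (1 : Matrix (Fin n) (Fin n) ℂ) - M u = ∑ v ∈ Finset.univ.erase u, M v := by
      rw [← hM.2, ← Finset.add_sum_erase _ _ (Finset.mem_univ u)]
      abel
    rw [h1]
    exact psd_sum _ fun v _ => hM.1 v
  have hdiag : ∀ k, (M u k k).re ≤ 1 := by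
    intro k
    have h2 := diag_entry_re_nonneg hcompl k
    have h3 : (((1 : Matrix (Fin n) (Fin n) ℂ) - M u) k k).re = 1 - (M u k k).re := by
      simp [Matrix.sub_apply, Matrix.one_apply]
    linarith [h3 ▸ h2]
  calc ‖M u i j‖ ≤ ((M u i i).re + (M u j j).re) / 2 := entry_abs_le_half (hM.1 u) i j
    _ ≤ 1 := by linarith [hdiag i, hdiag j]

lemma povm_compact [Fintype U] (P₀ : Set (U → Matrix (Fin n) (Fin n) ℂ))
    (hP₀closed : IsClosed P₀) (hP₀povm : ∀ M ∈ P₀, IsPOVM M) : IsCompact P₀ := by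
  classical
  have hbig : IsCompact (Set.univ.pi fun _ : U => (Set.univ.pi fun _ : Fin n =>
      Set.univ.pi fun _ : Fin n => Metric.closedBall (0:ℂ) 1) : Set (U → Matrix (Fin n) (Fin n) ℂ)) := by
    refine isCompact_univ_pi fun u => ?_
    exact isCompact_univ_pi fun i => isCompact_univ_pi fun j => isCompact_closedBall 0 1
  refine hbig.of_isClosed_subset hP₀closed ?_
  intro M hMmem u _ i _ j _
  have := povm_entry_bound (hP₀povm M hMmem) u i j
  simp only [Metric.mem_closedBall, dist_zero_right]
  simpa using this

lemma risk_ssa [Fintype U] (w : Θ → U → ℝ) (ρ : Θ → Matrix (Fin n) (Fin n) ℂ)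
    (M N : U → Matrix (Fin n) (Fin n) ℂ) (a b : ℝ) (θ : Θ) :
    risk w ρ (a • M + b • N) θ = a * risk w ρ M θ + b * risk w ρ N θ := by
  unfold risk
  rw [Finset.mul_sum, Finset.mul_sum, ← Finset.sum_add_distrib]
  refine Finset.sum_congr rfl fun u _ => ?_
  have h : ρ θ * (a • M + b • N) u = a • (ρ θ * M u) + b • (ρ θ * N u) := by
    simp [Pi.add_apply, Pi.smul_apply, mul_add, Matrix.mul_smul]
  rw [h, Matrix.trace_add, Matrix.trace_smul, Matrix.trace_smul, Complex.add_re]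
  have hre : ∀ (r : ℝ) (z : ℂ), (r • z).re = r * z.re := fun r z => by
    simp [Complex.real_smul]
  rw [hre, hre]
  ring

lemma risk_add [Fintype U] (w : Θ → U → ℝ) (ρ : Θ → Matrix (Fin n) (Fin n) ℂ)
    (M N : U → Matrix (Fin n) (Fin n) ℂ) (θ : Θ) :
    risk w ρ (M + N) θ = risk w ρ M θ + risk w ρ N θ := by
  have := risk_ssa w ρ M N 1 1 θ
  simpa using this

lemma risk_smul [Fintype U] (w : Θ → U → ℝ) (ρ : Θ → Matrix (Fin n) (Fin n) ℂ)
    (M : U → Matrix (Fin n) (Fin n) ℂ) (a : ℝ) (θ : Θ) :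
    risk w ρ (a • M) θ = a * risk w ρ M θ := by
  have := risk_ssa w ρ M M a 0 θ
  simpa using this

lemma risk_cont [Fintype U] (w : Θ → U → ℝ) (ρ : Θ → Matrix (Fin n) (Fin n) ℂ) (θ : Θ) :
    Continuous fun M : U → Matrix (Fin n) (Fin n) ℂ => risk w ρ M θ := by
  unfold risk
  refine continuous_finset_sum _ fun u _ => Continuous.mul continuous_const ?_
  have h : (fun M : U → Matrix (Fin n) (Fin n) ℂ => ((ρ θ * M u).trace).re)
      = fun M => ∑ i, ∑ k, (ρ θ i k * M u k i).re := by
    funext M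
    rw [Matrix.trace]
    rw [show (∑ i, (ρ θ * M u).diag i) = ∑ i, ∑ k, ρ θ i k * M u k i by
      refine Finset.sum_congr rfl fun i _ => ?_; rw [Matrix.diag_apply, Matrix.mul_apply]]
    rw [Complex.re_sum]
    exact Finset.sum_congr rfl fun i _ => by rw [Complex.re_sum]
  rw [h]
  refine continuous_finset_sum _ fun i _ => continuous_finset_sum _ fun k _ => ?_
  exact Complex.continuous_re.comp (Continuous.mul continuous_const
    ((continuous_apply i).comp ((continuous_apply k).comp (continuous_apply u))))

lemma ciInf_subtype_eq {α : Type*} {s : Set α} [Nonempty s] {F : α → ℝ} {x : α} (hx : x ∈ s)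
    (hmin : ∀ y ∈ s, F x ≤ F y) : (⨅ m : s, F m.1) = F x := by
  apply le_antisymm
  · have hbdd : BddBelow (Set.range fun m : s => F m.1) := by
      refine ⟨F x, ?_⟩
      rintro r ⟨m, rfl⟩
      exact hmin m.1 m.2
    exact ciInf_le hbdd ⟨x, hx⟩
  · exact le_ciInf fun m => hmin m m.2

end QMinimaxAux

open QMinimaxAux

/-- the quantum minimax theorem relative to a nonempty closed convex
subclass P₀ of POVMs, together with the existence of a minimax POVM in P₀ and of a
least favorable prior for the restricted problem. -/
theorem quantum_minimax_restricted_class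
    [Fintype Θ] [Nonempty Θ] [Fintype U] [Nonempty U]
    (ρ : Θ → Matrix (Fin n) (Fin n) ℂ)
    (hρ : ∀ θ, (ρ θ).PosSemidef ∧ (ρ θ).trace = 1)
    (w : Θ → U → ℝ) (hw : ∀ θ u, 0 ≤ w θ u)
    (P₀ : Set (U → Matrix (Fin n) (Fin n) ℂ))
    (hP₀ne : P₀.Nonempty) (hP₀closed : IsClosed P₀) (hP₀conv : Convex ℝ P₀)
    (hP₀povm : ∀ M ∈ P₀, IsPOVM M) :
    (⨅ M : P₀, ⨆ θ, risk w ρ M.1 θ) =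
      (⨆ π : stdSimplex ℝ Θ, ⨅ M : P₀, ∑ θ, risk w ρ M.1 θ * (π : Θ → ℝ) θ) ∧
    (∃ Mstar ∈ P₀, ∀ M ∈ P₀, (⨆ θ, risk w ρ Mstar θ) ≤ ⨆ θ, risk w ρ M θ) ∧
    (∃ πLF ∈ stdSimplex ℝ Θ, ∀ π ∈ stdSimplex ℝ Θ,
      (⨅ M : P₀, ∑ θ, risk w ρ M.1 θ * π θ) ≤ ⨅ M : P₀, ∑ θ, risk w ρ M.1 θ * πLF θ) := by
  classical
  haveI : Nonempty P₀ := hP₀ne.to_subtype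
  obtain ⟨M₀, hM₀⟩ := hP₀ne
  have hstdne : (stdSimplex ℝ Θ).Nonempty := by
    refine ⟨fun _ => (Fintype.card Θ : ℝ)⁻¹, fun θ => by positivity, ?_⟩
    rw [Finset.sum_const, nsmul_eq_mul, Finset.card_univ,
      mul_inv_cancel₀ (by exact_mod_cast Fintype.card_ne_zero)]
  haveI : Nonempty (stdSimplex ℝ Θ) := hstdne.to_subtype
  have hcpt : IsCompact P₀ := povm_compact P₀ hP₀closed hP₀povm
  have hrcont : ∀ θ, Continuous fun M : U → Matrix (Fin n) (Fin n) ℂ => risk w ρ M θ :=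
    fun θ => risk_cont w ρ θ
  have hrnonneg : ∀ M ∈ P₀, ∀ θ, 0 ≤ risk w ρ M θ := fun M hMP θ =>
    Finset.sum_nonneg fun u _ =>
      mul_nonneg (hw θ u) (trace_mul_re_nonneg (hρ θ).1 ((hP₀povm M hMP).1 u))
  -- attainment of the Bayes-optimal measurement for any prior
  have hfmin : ∀ π : Θ → ℝ, ∃ Mm ∈ P₀, ∀ N ∈ P₀,
      (∑ θ, risk w ρ Mm θ * π θ) ≤ ∑ θ, risk w ρ N θ * π θ := by
    intro π
    have hc : Continuous fun M : U → Matrix (Fin n) (Fin n) ℂ => ∑ θ, risk w ρ M θ * π θ :=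
      continuous_finset_sum _ fun θ _ => (hrcont θ).mul continuous_const
    obtain ⟨x, hx, hmin⟩ := hcpt.exists_isMinOn ⟨M₀, hM₀⟩ hc.continuousOn
    exact ⟨x, hx, fun N hN => (isMinOn_iff.mp hmin) N hN⟩
  set G : (Θ → ℝ) → ℝ := fun π => ⨅ M : P₀, ∑ θ, risk w ρ M.1 θ * π θ with hGdef
  have hGeq : ∀ (π : Θ → ℝ) (x) (_ : x ∈ P₀),
      (∀ N ∈ P₀, (∑ θ, risk w ρ x θ * π θ) ≤ ∑ θ, risk w ρ N θ * π θ) →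
      G π = ∑ θ, risk w ρ x θ * π θ := by
    intro π x hx h
    exact ciInf_subtype_eq (s := P₀) (F := fun N => ∑ θ, risk w ρ N θ * π θ) hx h
  have hGle : ∀ (π : Θ → ℝ) (N), N ∈ P₀ → G π ≤ ∑ θ, risk w ρ N θ * π θ := by
    intro π N hN
    obtain ⟨x, hx, hmin⟩ := hfmin π
    rw [hGeq π x hx hmin]; exact hmin N hN
  -- elementary sup-over-Θ facts
  have hleS : ∀ (M : U → Matrix (Fin n) (Fin n) ℂ) (θ : Θ),
      risk w ρ M θ ≤ ⨆ θ', risk w ρ M θ' := fun M θ =>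
    le_ciSup (Set.Finite.bddAbove (Set.finite_range _)) θ
  have hfS : ∀ (M : U → Matrix (Fin n) (Fin n) ℂ), ∀ π ∈ stdSimplex ℝ Θ,
      (∑ θ, risk w ρ M θ * π θ) ≤ ⨆ θ, risk w ρ M θ := by
    intro M π hπ
    calc (∑ θ, risk w ρ M θ * π θ) ≤ ∑ θ, (⨆ θ', risk w ρ M θ') * π θ :=
        Finset.sum_le_sum fun θ _ => mul_le_mul_of_nonneg_right (hleS M θ) (hπ.1 θ)
      _ = ⨆ θ', risk w ρ M θ' := by rw [← Finset.mul_sum, hπ.2, mul_one]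
  set v : ℝ := ⨆ π : stdSimplex ℝ Θ, G ↑π with hvdef
  have hGbdd : BddAbove (Set.range fun π : stdSimplex ℝ Θ => G ↑π) := by
    refine ⟨⨆ θ, risk w ρ M₀ θ, ?_⟩
    rintro r ⟨π, rfl⟩
    exact (hGle π.1 M₀ hM₀).trans (hfS M₀ π.1 π.2)
  have hGlev : ∀ π ∈ stdSimplex ℝ Θ, G π ≤ v := fun π hπ => le_ciSup hGbdd ⟨π, hπ⟩
  have hvleS : ∀ M ∈ P₀, v ≤ ⨆ θ, risk w ρ M θ := fun M hM =>
    ciSup_le fun π => (hGle π.1 M hM).trans (hfS M π.1 π.2)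
  -- existence of a measurement whose risk function is dominated by v (separation argument)
  have hMstar : ∃ Mst ∈ P₀, ∀ θ, risk w ρ Mst θ ≤ v := by
    by_contra hcon
    push_neg at hcon
    set K : Set (Θ → ℝ) := (fun M θ => risk w ρ M θ) '' P₀ with hK
    have hKcpt : IsCompact K := hcpt.image (continuous_pi fun θ => hrcont θ)
    have hKconv : Convex ℝ K := by
      refine hP₀conv.is_linear_image ⟨fun M N => ?_, fun a M => ?_⟩
      · funext θ; exact risk_add w ρ M N θ
      · funext θ; exact risk_smul w ρ M a θ
    have hCrw : {x : Θ → ℝ | ∀ θ, x θ ≤ v} = ⋂ θ, {x : Θ → ℝ | x θ ≤ v} := by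
      ext x; simp [Set.mem_iInter]
    have hCclosed : IsClosed {x : Θ → ℝ | ∀ θ, x θ ≤ v} := by
      rw [hCrw]
      exact isClosed_iInter fun θ => isClosed_le (continuous_apply θ) continuous_const
    have hCconv : Convex ℝ {x : Θ → ℝ | ∀ θ, x θ ≤ v} := by
      rw [hCrw]
      exact convex_iInter fun θ => convex_halfSpace_le ⟨fun _ _ => rfl, fun _ _ => rfl⟩ v
    have hdisj : Disjoint K {x : Θ → ℝ | ∀ θ, x θ ≤ v} := by
      rw [Set.disjoint_left]
      rintro x ⟨M, hM, rfl⟩ hxC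
      obtain ⟨θ, hθ⟩ := hcon M hM
      exact absurd (hxC θ) (not_le.mpr hθ)
    obtain ⟨l, s, t, hls, hst, htl⟩ :=
      geometric_hahn_banach_compact_closed hKconv hKcpt hCconv hCclosed hdisj
    set p : Θ → ℝ := fun θ => -(l (Pi.single θ (1:ℝ) : Θ → ℝ)) with hp
    have hlx : ∀ x : Θ → ℝ, l x = -∑ θ, x θ * p θ := by
      intro x
      have hx : x = ∑ θ, x θ • (Pi.single θ (1:ℝ) : Θ → ℝ) := by
        funext j
        rw [Finset.sum_apply]
        simp [Pi.single_apply]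
      calc l x = l (∑ θ, x θ • (Pi.single θ (1:ℝ) : Θ → ℝ)) := by rw [← hx]
        _ = ∑ θ, x θ • l (Pi.single θ (1:ℝ) : Θ → ℝ) := by
            rw [map_sum]
            exact Finset.sum_congr rfl fun θ _ => by rw [l.map_smul]
        _ = -∑ θ, x θ * p θ := by
            rw [← Finset.sum_neg_distrib]
            exact Finset.sum_congr rfl fun θ _ => by rw [hp, smul_eq_mul]; ring
    have hconstv : (fun _ : Θ => v) ∈ {x : Θ → ℝ | ∀ θ, x θ ≤ v} := fun θ => le_rfl
    have hpnn : ∀ θ, 0 ≤ p θ := by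
      intro θ
      by_contra hneg
      push_neg at hneg
      set T : ℝ := max 0 ((t - l (fun _ => v)) / p θ + 1) with hT
      have hT0 : 0 ≤ T := le_max_left _ _
      have hT2 : (t - l (fun _ => v)) / p θ < T := lt_of_lt_of_le (lt_add_one _) (le_max_right _ _)
      have hb : (fun _ : Θ => v) - T • (Pi.single θ 1 : Θ → ℝ) ∈ {x : Θ → ℝ | ∀ θ, x θ ≤ v} := by
        intro j
        simp only [Pi.sub_apply, Pi.smul_apply, smul_eq_mul]
        have : 0 ≤ T * (Pi.single θ (1:ℝ) : Θ → ℝ) j := by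
          by_cases hj : j = θ <;> simp [hj, Pi.single_apply, hT0]
        linarith
      have hval := htl _ hb
      rw [map_sub, l.map_smul, smul_eq_mul] at hval
      have hlsθ : l (Pi.single θ (1:ℝ) : Θ → ℝ) = -p θ := by rw [hp]; ring
      rw [hlsθ] at hval
      -- hval : t < l (const v) - T * (-p θ) = l const v + T * p θ
      have hmul : T * p θ < ((t - l (fun _ => v)) / p θ) * p θ :=
        mul_lt_mul_of_neg_right hT2 hneg
      rw [div_mul_cancel₀ _ (ne_of_lt hneg)] at hmul
      linarith
    have hSnn : 0 ≤ ∑ θ, p θ := Finset.sum_nonneg fun θ _ => hpnn θ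
    have haK : (fun θ => risk w ρ M₀ θ) ∈ K := ⟨M₀, hM₀, rfl⟩
    have hSpos : 0 < ∑ θ, p θ := by
      rcases lt_or_eq_of_le hSnn with h | h
      · exact h
      · exfalso
        have hz : ∀ θ ∈ Finset.univ, p θ = 0 :=
          (Finset.sum_eq_zero_iff_of_nonneg fun θ _ => hpnn θ).mp h.symm
        have hl0 : ∀ x : Θ → ℝ, l x = 0 := by
          intro x
          rw [hlx]
          rw [Finset.sum_eq_zero fun θ _ => by rw [hz θ (Finset.mem_univ θ), mul_zero]]
          ring
        have h1 := hls _ haK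
        have h2 := htl _ hconstv
        rw [hl0] at h1
        rw [hl0] at h2
        linarith
    set πs : Θ → ℝ := fun θ => p θ / (∑ θ', p θ') with hπs
    have hπsmem : πs ∈ stdSimplex ℝ Θ := by
      refine ⟨fun θ => div_nonneg (hpnn θ) hSnn, ?_⟩
      rw [← Finset.sum_div, div_self (ne_of_gt hSpos)]
    have hkey : ∀ M ∈ P₀, v < ∑ θ, risk w ρ M θ * πs θ := by
      intro M hM
      have haMK : (fun θ => risk w ρ M θ) ∈ K := ⟨M, hM, rfl⟩
      have h1 := hls _ haMK
      rw [hlx] at h1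
      have h2 := htl _ hconstv
      rw [hlx] at h2
      have hvs : ∑ θ, v * p θ = v * ∑ θ, p θ := by rw [Finset.mul_sum]
      rw [hvs] at h2
      have hform : ∑ θ, risk w ρ M θ * πs θ = (∑ θ, risk w ρ M θ * p θ) / (∑ θ', p θ') := by
        rw [Finset.sum_div]
        exact Finset.sum_congr rfl fun θ _ => by rw [hπs, mul_div_assoc]
      rw [hform, lt_div_iff₀ hSpos]
      -- h1 : -∑ risk * p < s ; h2 : t < -(v * ∑ p) ; hst : s < t
      linarith
    obtain ⟨x, hx, hmin⟩ := hfmin πs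
    have hGval : G πs = ∑ θ, risk w ρ x θ * πs θ := hGeq πs x hx hmin
    have hcontra := hGlev πs hπsmem
    rw [hGval] at hcontra
    exact absurd hcontra (not_le.mpr (hkey x hx))
  obtain ⟨Mst, hMst, hMstle⟩ := hMstar
  have hSMst : (⨆ θ, risk w ρ Mst θ) ≤ v := ciSup_le hMstle
  have hbddS : BddBelow (Set.range fun M : P₀ => ⨆ θ, risk w ρ M.1 θ) := by
    refine ⟨0, ?_⟩
    rintro r ⟨M, rfl⟩
    obtain θ₀ := Classical.arbitrary Θ
    exact le_trans (hrnonneg M.1 M.2 θ₀) (hleS M.1 θ₀)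
  have heq : (⨅ M : P₀, ⨆ θ, risk w ρ M.1 θ) = v := by
    apply le_antisymm
    · exact le_trans (ciInf_le hbddS ⟨Mst, hMst⟩) hSMst
    · exact le_ciInf fun M => hvleS M.1 M.2
  refine ⟨heq, ⟨Mst, hMst, fun M hM => hSMst.trans (hvleS M hM)⟩, ?_⟩
  -- least favorable prior: G is Lipschitz, hence continuous; maximize over the compact simplex
  set B : ℝ := ∑ θ, ∑ u, w θ u * ∑ i, ∑ k, ‖ρ θ i k‖ with hB
  have hBnn : 0 ≤ B := by
    refine Finset.sum_nonneg fun θ _ => Finset.sum_nonneg fun u _ => mul_nonneg (hw θ u) ?_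
    exact Finset.sum_nonneg fun i _ => Finset.sum_nonneg fun k _ => (norm_nonneg _)
  have hriskbd : ∀ M ∈ P₀, ∀ θ, risk w ρ M θ ≤ B := by
    intro M hM θ
    have hB1 : ∀ u : U, ((ρ θ * M u).trace).re ≤ ∑ i, ∑ k, ‖ρ θ i k‖ := by
      intro u
      have h1 : ((ρ θ * M u).trace).re ≤ ‖(ρ θ * M u).trace‖ := Complex.re_le_norm _
      have h2 : ‖(ρ θ * M u).trace‖ ≤ ∑ i, ‖(ρ θ * M u) i i‖ := by
        rw [Matrix.trace]
        exact norm_sum_le _ _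
      have h3 : ∀ i, ‖(ρ θ * M u) i i‖ ≤ ∑ k, ‖ρ θ i k‖ := by
        intro i
        rw [Matrix.mul_apply]
        refine (norm_sum_le _ _).trans (Finset.sum_le_sum fun k _ => ?_)
        rw [norm_mul]
        calc ‖ρ θ i k‖ * ‖M u k i‖
            ≤ ‖ρ θ i k‖ * 1 :=
              mul_le_mul_of_nonneg_left (povm_entry_bound (hP₀povm M hM) u k i)
                (norm_nonneg _)
          _ = ‖ρ θ i k‖ := mul_one _
      exact h1.trans (h2.trans (Finset.sum_le_sum fun i _ => h3 i))
    calc risk w ρ M θ ≤ ∑ u, w θ u * ∑ i, ∑ k, ‖ρ θ i k‖ :=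
        Finset.sum_le_sum fun u _ => mul_le_mul_of_nonneg_left (hB1 u) (hw θ u)
      _ ≤ B := by
        rw [hB]
        refine Finset.single_le_sum (f := fun θ' => ∑ u, w θ' u * ∑ i, ∑ k, ‖ρ θ' i k‖)
          (fun θ' _ => ?_) (Finset.mem_univ θ)
        exact Finset.sum_nonneg fun u _ => mul_nonneg (hw θ' u)
          (Finset.sum_nonneg fun i _ => Finset.sum_nonneg fun k _ => norm_nonneg _)
  have hGlip : ∀ π π' : Θ → ℝ, G π ≤ G π' + B * ∑ θ, |π θ - π' θ| := by
    intro π π'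
    obtain ⟨x, hx, hmin⟩ := hfmin π'
    have hGπ' : G π' = ∑ θ, risk w ρ x θ * π' θ := hGeq π' x hx hmin
    have h1 : G π ≤ ∑ θ, risk w ρ x θ * π θ := hGle π x hx
    have h2 : ∑ θ, risk w ρ x θ * π θ - ∑ θ, risk w ρ x θ * π' θ ≤ B * ∑ θ, |π θ - π' θ| := by
      rw [← Finset.sum_sub_distrib, Finset.mul_sum]
      refine Finset.sum_le_sum fun θ _ => ?_
      have hterm : risk w ρ x θ * π θ - risk w ρ x θ * π' θ = risk w ρ x θ * (π θ - π' θ) := by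
        ring
      rw [hterm]
      calc risk w ρ x θ * (π θ - π' θ) ≤ |risk w ρ x θ * (π θ - π' θ)| := le_abs_self _
        _ = risk w ρ x θ * |π θ - π' θ| := by
            rw [abs_mul, abs_of_nonneg (hrnonneg x hx θ)]
        _ ≤ B * |π θ - π' θ| :=
            mul_le_mul_of_nonneg_right (hriskbd x hx θ) (abs_nonneg _)
    linarith
  have hGcont : Continuous G := by
    have hlip : LipschitzWith (Real.toNNReal (B * (Fintype.card Θ : ℝ))) G := by
      apply LipschitzWith.of_dist_le_mul
      intro π π'
      have hub : ∀ q q' : Θ → ℝ, ∑ θ, |q θ - q' θ| ≤ (Fintype.card Θ : ℝ) * dist q q' := by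
        intro q q'
        have hstep : ∀ θ : Θ, |q θ - q' θ| ≤ dist q q' := by
          intro θ
          rw [← Real.dist_eq]
          exact dist_le_pi_dist q q' θ
        calc ∑ θ, |q θ - q' θ| ≤ ∑ _θ : Θ, dist q q' := Finset.sum_le_sum fun θ _ => hstep θ
          _ = (Fintype.card Θ : ℝ) * dist q q' := by
              rw [Finset.sum_const, nsmul_eq_mul, Finset.card_univ]
      have h1 := hGlip π π'
      have h2 := hGlip π' π
      have hub1 := hub π π'
      have hub2 := hub π' π
      have hd : dist π' π = dist π π' := dist_comm _ _
      rw [hd] at hub2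
      have hcoe : B * (Fintype.card Θ : ℝ) ≤ ((Real.toNNReal (B * (Fintype.card Θ : ℝ))) : ℝ) :=
        Real.le_coe_toNNReal _
      rw [Real.dist_eq, abs_sub_le_iff]
      have hdnn : (0:ℝ) ≤ dist π π' := dist_nonneg
      constructor
      · nlinarith [mul_le_mul_of_nonneg_left hub1 hBnn]
      · nlinarith [mul_le_mul_of_nonneg_left hub2 hBnn]
    exact hlip.continuous
  obtain ⟨πLF, hπLF, hmax⟩ :=
    (isCompact_stdSimplex ℝ Θ).exists_isMaxOn hstdne hGcont.continuousOn
  exact ⟨πLF, hπLF, fun π hπ => (isMaxOn_iff.mp hmax) π hπ⟩
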